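/- Let a, b, c, d be real numbers with ad − bc = 1, and let t, r be complex numbers satisfying the scattering matching conditions a(1 + r) + i·b(1 − r) = t and c(1 + r) + i·d(1 − r) = i·t. Then |t|² · (a² + b² + c² + d² + 2) = 4; that is, the transmission coefficient satisfies |t|² = 4/(‖A‖²_HS + 2), where ‖A‖²_HS = a² + b² + c² + d² is the squared Hilbert–Schmidt norm of the transfer matrix A = [[a,b],[c,d]]. -/

import Mathlib

theorem stmt_3 (a b c d : ℝ) (hdet : a * d - b * c = 1) (t r : ℂ)
    (h1 : (a : ℂ) * (1 + r) + Complex.I * b * (1 - r) = t)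
    (h2 : (c : ℂ) * (1 + r) + Complex.I * d * (1 - r) = Complex.I * t) :
    ‖t‖ ^ 2 * (a ^ 2 + b ^ 2 + c ^ 2 + d ^ 2 + 2) = 4 := by
  have hI : (Complex.I)^2 = -1 := Complex.I_sq
  have hdetC : (a:ℂ)*d - (b:ℂ)*c = 1 := by exact_mod_cast hdet
  have ht : t * (((a:ℂ)+d) + Complex.I*((c:ℂ)-b)) = 2 := by
    linear_combination (-(d:ℂ) - Complex.I*c)*h1 + ((b:ℂ) + Complex.I*a)*h2 +
      ((a:ℂ)*t - ((a:ℂ)*d - b*c)*(1-r))*hI + 2*hdetC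
  have habs := congrArg (fun z => ‖z‖ ^ 2) ht
  simp only [norm_mul, mul_pow] at habs
  have hw : ‖((a:ℂ)+d) + Complex.I*((c:ℂ)-b)‖ ^ 2 = (a+d)^2 + (c-b)^2 := by
    rw [Complex.sq_norm, Complex.normSq_apply]
    simp
    ring
  rw [hw] at habs
  have h4 : ‖(2:ℂ)‖ ^ 2 = 4 := by norm_num
  rw [h4] at habs
  nlinarith [habs, hdet]
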